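/- Let A be a finite connected simple graph with at least three vertices that has a pendant vertex (a vertex of degree 1). Then the subdivision graph S(A) is not 2-edge distance-balanced. -/

import Mathlib

open SimpleGraph

/-- Distance from a vertex to an edge (as an unordered pair): the minimum of
the distances to the two endpoints. -/
noncomputable def eDist {V : Type*} (G : SimpleGraph V) (g : V) (f : Sym2 V) : ℕ :=
  Sym2.lift ⟨fun x y => min (G.dist g x) (G.dist g y), fun _ _ => min_comm _ _⟩ f

/-- The number of edges of `G` that are closer to `g` than to `h`. -/
noncomputable def mCloser {V : Type*} (G : SimpleGraph V) (g h : V) : ℕ :=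
  {f ∈ G.edgeSet | eDist G g f < eDist G h f}.ncard

/-- `G` is 2-edge distance-balanced. -/
def TwoEDB {V : Type*} (G : SimpleGraph V) : Prop :=
  ∀ g h : V, G.dist g h = 2 → mCloser G g h = mCloser G h g

/-- The subdivision graph `S(A)`: insert a new vertex into each edge of `A`
(replace every edge by a path of length 2). -/
def Sgraph {α : Type*} (G : SimpleGraph α) : SimpleGraph (α ⊕ G.edgeSet) where
  Adj x y :=
    (∃ u e, x = Sum.inl u ∧ y = Sum.inr e ∧ u ∈ (e : Sym2 α)) ∨
    (∃ u e, x = Sum.inr e ∧ y = Sum.inl u ∧ u ∈ (e : Sym2 α))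
  symm := by
    constructor
    rintro x y (⟨u, e, hx, hy, h⟩ | ⟨u, e, hx, hy, h⟩)
    · exact Or.inr ⟨u, e, hy, hx, h⟩
    · exact Or.inl ⟨u, e, hy, hx, h⟩
  loopless := by
    constructor
    rintro x (⟨u, e, hx, hy, h⟩ | ⟨u, e, hx, hy, h⟩) <;> simp_all

section Aux
variable {α : Type*} {A : SimpleGraph α}

lemma eDist_mk {V : Type*} (G : SimpleGraph V) (g x y : V) :
    eDist G g s(x, y) = min (G.dist g x) (G.dist g y) := rfl

lemma sgraph_adj_inl_inr {u : α} {e : A.edgeSet} :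
    (Sgraph A).Adj (Sum.inl u) (Sum.inr e) ↔ u ∈ (e : Sym2 α) := by
  constructor
  · rintro (⟨u', e', h1, h2, h3⟩ | ⟨u', e', h1, h2, h3⟩) <;> simp_all
  · intro h; exact Or.inl ⟨u, e, rfl, rfl, h⟩

lemma sgraph_not_adj_inl_inl {a b : α} : ¬ (Sgraph A).Adj (Sum.inl a) (Sum.inl b) := by
  rintro (⟨u, e, h1, h2, h3⟩ | ⟨u, e, h1, h2, h3⟩) <;> simp_all

lemma sgraph_reach_inl {a b : α} (h : A.Reachable a b) :
    (Sgraph A).Reachable (Sum.inl a) (Sum.inl b) := by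
  obtain ⟨p⟩ := h
  induction p with
  | nil => exact Reachable.refl _
  | @cons a c b h p ih =>
    have h1 : (Sgraph A).Adj (Sum.inl a) (Sum.inr ⟨s(a, c), A.mem_edgeSet.mpr h⟩) :=
      sgraph_adj_inl_inr.mpr (by simp)
    have h2 : (Sgraph A).Adj (Sum.inr ⟨s(a, c), A.mem_edgeSet.mpr h⟩) (Sum.inl c) :=
      (sgraph_adj_inl_inr.mpr (by simp)).symm
    exact (h1.reachable.trans h2.reachable).trans ih

lemma sgraph_key {v w : α} {e0 : A.edgeSet}
    (hN : ∀ z, (Sgraph A).Adj (Sum.inl v) z → z = Sum.inr e0)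
    (hE : ∀ z, (Sgraph A).Adj (Sum.inr e0) z → z = Sum.inl v ∨ z = Sum.inl w)
    {z : α ⊕ A.edgeSet} (hz1 : z ≠ Sum.inl v) (hz2 : z ≠ Sum.inr e0)
    (hr : (Sgraph A).Reachable (Sum.inl v) z) :
    (Sgraph A).dist (Sum.inl w) z + 2 ≤ (Sgraph A).dist (Sum.inl v) z := by
  obtain ⟨p, hp⟩ := hr.exists_walk_length_eq_dist
  cases p with
  | nil => exact absurd rfl hz1
  | @cons _ y _ h1 p1 =>
    obtain rfl := hN _ h1
    cases p1 with
    | nil => exact absurd rfl hz2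
    | @cons _ y2 _ h2 p2 =>
      rcases hE _ h2 with rfl | rfl
      · have hle := SimpleGraph.dist_le p2
        simp [SimpleGraph.Walk.length_cons] at hp
        omega
      · have hle := SimpleGraph.dist_le p2
        simp [SimpleGraph.Walk.length_cons] at hp
        omega

end Aux

theorem Sgraph_pendant_not_twoEDB {α : Type*} [Fintype α] [DecidableEq α]
    (A : SimpleGraph α) [DecidableRel A.Adj]
    (hA : A.Connected) (hcard : 3 ≤ Fintype.card α)
    (hpendant : ∃ v : α, A.degree v = 1) :
    ¬ TwoEDB (Sgraph A) := by
  obtain ⟨v, hdeg⟩ := hpendant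
  obtain ⟨w, hw⟩ := Finset.card_eq_one.mp hdeg
  have hvw : A.Adj v w := by
    have : w ∈ A.neighborFinset v := by rw [hw]; simp
    exact (A.mem_neighborFinset v w).mp this
  have huniq : ∀ x, A.Adj v x → x = w := by
    intro x hx
    have : x ∈ A.neighborFinset v := (A.mem_neighborFinset v x).mpr hx
    rw [hw] at this; simpa using this
  set e0 : A.edgeSet := ⟨s(v, w), A.mem_edgeSet.mpr hvw⟩ with he0
  -- v lies only in edge e0
  have hmem_pend : ∀ e : A.edgeSet, v ∈ (e : Sym2 α) → e = e0 := by
    rintro ⟨e, he⟩ hv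
    obtain ⟨b, rfl⟩ := Sym2.mem_iff_exists.mp hv
    have : A.Adj v b := A.mem_edgeSet.mp he
    obtain rfl := huniq b this
    rfl
  have hN : ∀ z, (Sgraph A).Adj (Sum.inl v) z → z = Sum.inr e0 := by
    rintro z (⟨u, e, h1, rfl, h3⟩ | ⟨u, e, h1, h2, h3⟩)
    · simp only [Sum.inl.injEq] at h1
      subst h1
      rw [hmem_pend e h3]
    · simp at h1
  have hE : ∀ z, (Sgraph A).Adj (Sum.inr e0) z → z = Sum.inl v ∨ z = Sum.inl w := by
    rintro z (⟨u, e, h1, h2, h3⟩ | ⟨u, e, h1, rfl, h3⟩)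
    · simp at h1
    · simp only [Sum.inr.injEq] at h1
      subst h1
      rcases Sym2.mem_iff.mp h3 with rfl | rfl
      · exact Or.inl rfl
      · exact Or.inr rfl
  have a1 : (Sgraph A).Adj (Sum.inl v) (Sum.inr e0) := sgraph_adj_inl_inr.mpr (by simp [he0])
  have a2 : (Sgraph A).Adj (Sum.inr e0) (Sum.inl w) := (sgraph_adj_inl_inr.mpr (by simp [he0])).symm
  -- reachability from inl w to everything
  have hReachW : ∀ z : α ⊕ A.edgeSet, (Sgraph A).Reachable (Sum.inl w) z := by
    intro z
    cases z with
    | inl u => exact sgraph_reach_inl (hA.preconnected w u)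
    | inr e =>
      obtain ⟨⟨x, y⟩, hxy⟩ := Quot.exists_rep (e : Sym2 α)
      have hx : x ∈ (e : Sym2 α) := by rw [← hxy]; exact Sym2.mem_mk_left x y
      exact (sgraph_reach_inl (hA.preconnected w x)).trans
        (sgraph_adj_inl_inr.mpr hx).reachable
  have hReachV : ∀ z : α ⊕ A.edgeSet, (Sgraph A).Reachable (Sum.inl v) z := fun z =>
    (a1.reachable.trans a2.reachable).trans (hReachW z)
  -- distances
  have hd_vw : (Sgraph A).dist (Sum.inl v) (Sum.inl w) = 2 := by
    have hle := SimpleGraph.dist_le (SimpleGraph.Walk.cons a1 (SimpleGraph.Walk.cons a2 SimpleGraph.Walk.nil))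
    simp at hle
    have hne : (Sum.inl v : α ⊕ A.edgeSet) ≠ Sum.inl w := by simp [hvw.ne]
    have hpos := (hReachV (Sum.inl w)).pos_dist_of_ne hne
    have h1 : (Sgraph A).dist (Sum.inl v) (Sum.inl w) ≠ 1 := by
      intro h
      exact sgraph_not_adj_inl_inl (SimpleGraph.dist_eq_one_iff_adj.mp h)
    omega
  have hd_v_e0 : (Sgraph A).dist (Sum.inl v) (Sum.inr e0) = 1 :=
    SimpleGraph.dist_eq_one_iff_adj.mpr a1
  have hd_w_e0 : (Sgraph A).dist (Sum.inl w) (Sum.inr e0) = 1 :=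
    SimpleGraph.dist_eq_one_iff_adj.mpr a2.symm
  have hUB : ∀ z, (Sgraph A).dist (Sum.inl v) z ≤ (Sgraph A).dist (Sum.inl w) z + 2 := by
    intro z
    obtain ⟨q, hq⟩ := (hReachW z).exists_walk_length_eq_dist
    have := SimpleGraph.dist_le (SimpleGraph.Walk.cons a1 (SimpleGraph.Walk.cons a2 q))
    simp at this
    omega
  have hKey : ∀ z : α ⊕ A.edgeSet, z ≠ Sum.inl v → z ≠ Sum.inr e0 →
      (Sgraph A).dist (Sum.inl v) z = (Sgraph A).dist (Sum.inl w) z + 2 := by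
    intro z hz1 hz2
    have := sgraph_key hN hE hz1 hz2 (hReachV z)
    have := hUB z
    omega
  -- edges of Sgraph
  have hEdge : ∀ f ∈ (Sgraph A).edgeSet, ∃ (u : α) (e : A.edgeSet),
      u ∈ (e : Sym2 α) ∧ f = s(Sum.inl u, Sum.inr e) := by
    intro f hf
    induction f with
    | _ x y =>
      rw [SimpleGraph.mem_edgeSet] at hf
      rcases hf with ⟨u, e, rfl, rfl, h3⟩ | ⟨u, e, rfl, rfl, h3⟩
      · exact ⟨u, e, h3, rfl⟩
      · exact ⟨u, e, h3, Sym2.eq_swap⟩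
  -- dist formulas for edges other than e0
  have hEdist : ∀ (u : α) (e : A.edgeSet), u ∈ (e : Sym2 α) → e ≠ e0 →
      eDist (Sgraph A) (Sum.inl w) s(Sum.inl u, Sum.inr e) <
      eDist (Sgraph A) (Sum.inl v) s(Sum.inl u, Sum.inr e) := by
    intro u e hu he
    have hu_ne : (Sum.inl u : α ⊕ A.edgeSet) ≠ Sum.inl v := by
      simp only [ne_eq, Sum.inl.injEq]
      rintro rfl
      exact he (hmem_pend e hu)
    have h1 := hKey (Sum.inl u) hu_ne (by simp)
    have h2 := hKey (Sum.inr e) (by simp) (by simp [he])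
    rw [eDist_mk, eDist_mk, h1, h2]
    omega
  set S := Sgraph A
  set s1 : Sym2 (α ⊕ A.edgeSet) := s(Sum.inl v, Sum.inr e0) with hs1
  set s2 : Sym2 (α ⊕ A.edgeSet) := s(Sum.inl w, Sum.inr e0) with hs2
  have hd_w_v : S.dist (Sum.inl w) (Sum.inl v) = 2 := by
    rw [SimpleGraph.dist_comm]; exact hd_vw
  -- eDist values on s1 and s2
  have hed1v : eDist S (Sum.inl v) s1 = 0 := by
    rw [hs1, eDist_mk, SimpleGraph.dist_self, hd_v_e0]; omega
  have hed1w : eDist S (Sum.inl w) s1 = 1 := by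
    rw [hs1, eDist_mk, hd_w_v, hd_w_e0]; omega
  have hed2v : eDist S (Sum.inl v) s2 = 1 := by
    rw [hs2, eDist_mk, hd_vw, hd_v_e0]; omega
  have hed2w : eDist S (Sum.inl w) s2 = 0 := by
    rw [hs2, eDist_mk, SimpleGraph.dist_self, hd_w_e0]; omega
  -- the set of edges closer to v is exactly {s1}
  have hMv : {f ∈ S.edgeSet | eDist S (Sum.inl v) f < eDist S (Sum.inl w) f} = {s1} := by
    ext f
    constructor
    · rintro ⟨hf, hlt⟩
      obtain ⟨u, e, hu, rfl⟩ := hEdge f hf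
      by_cases he : e = e0
      · subst he
        rcases Sym2.mem_iff.mp hu with rfl | rfl
        · rfl
        · rw [← hs2] at hlt
          rw [hed2v, hed2w] at hlt
          omega
      · exact absurd hlt (by have := hEdist u e hu he; omega)
    · rintro rfl
      refine ⟨S.mem_edgeSet.mpr a1, ?_⟩
      rw [hed1v, hed1w]; omega
  have hm1 : mCloser S (Sum.inl v) (Sum.inl w) = 1 := by
    rw [mCloser, hMv, Set.ncard_singleton]
  -- find a third vertex and edge
  have hx : ∃ x : α, x ≠ v ∧ x ≠ w := by
    by_contra hc
    push_neg at hc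
    have hsub : (Finset.univ : Finset α) ⊆ {v, w} := by
      intro x _
      rcases eq_or_ne x v with rfl | hxv
      · simp
      · simp [hc x hxv]
    have := Finset.card_le_card hsub
    have h2 : ({v, w} : Finset α).card ≤ 2 := Finset.card_insert_le _ _ |>.trans (by simp)
    rw [Finset.card_univ] at this
    omega
  obtain ⟨x, hxv, hxw⟩ := hx
  obtain ⟨p⟩ := hA.preconnected x v
  have hxadj : ∃ y, A.Adj x y := by
    cases p with
    | nil => exact absurd rfl hxv
    | cons h _ => exact ⟨_, h⟩
  obtain ⟨y, hxy⟩ := hxadj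
  set e1 : A.edgeSet := ⟨s(x, y), A.mem_edgeSet.mpr hxy⟩ with he1
  have he1ne : e1 ≠ e0 := by
    intro h
    have : x ∈ (e0 : Sym2 α) := by rw [← h]; simp [he1]
    rcases Sym2.mem_iff.mp this with rfl | rfl
    · exact hxv rfl
    · exact hxw rfl
  set s3 : Sym2 (α ⊕ A.edgeSet) := s(Sum.inl x, Sum.inr e1) with hs3
  have hs3mem : s3 ∈ {f ∈ S.edgeSet | eDist S (Sum.inl w) f < eDist S (Sum.inl v) f} := by
    constructor
    · exact S.mem_edgeSet.mpr (sgraph_adj_inl_inr.mpr (by simp [he1]))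
    · exact hEdist x e1 (by simp [he1]) he1ne
  have hs2mem : s2 ∈ {f ∈ S.edgeSet | eDist S (Sum.inl w) f < eDist S (Sum.inl v) f} := by
    constructor
    · exact S.mem_edgeSet.mpr a2.symm
    · rw [hed2v, hed2w]; omega
  have hne23 : s2 ≠ s3 := by
    intro h
    rw [hs2, hs3, Sym2.eq_iff] at h
    rcases h with ⟨-, h2⟩ | ⟨h1, -⟩
    · exact he1ne (by simpa using h2.symm)
    · simp at h1
  have hm2 : 2 ≤ mCloser S (Sum.inl w) (Sum.inl v) := by
    rw [mCloser]
    have hfin : {f ∈ S.edgeSet | eDist S (Sum.inl w) f < eDist S (Sum.inl v) f}.Finite :=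
      Set.toFinite _
    have := Set.one_lt_ncard hfin |>.mpr ⟨s2, hs2mem, s3, hs3mem, hne23⟩
    omega
  intro hT
  have := hT (Sum.inl v) (Sum.inl w) hd_vw
  rw [hm1] at this
  omega
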